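/- Let A be the automorphism of ℚ² given by the matrix [[1,2],[1,1]], i.e., A(a,b) = (a+2b, a+b), and let K = ℚ² ⋊ ℤ be the semidirect product in which the generator of ℤ acts on ℚ² by A. Then K is bi-orderable: K admits a positive cone P with kPk⁻¹ ⊆ P for all k ∈ K. -/

import Mathlib

/-- `P` is the positive cone of a left-invariant strict total order on `G`. -/
def IsPositiveCone {G : Type*} [Group G] (P : Set G) : Prop :=
  (∀ a ∈ P, ∀ b ∈ P, a * b ∈ P) ∧
  (∀ g : G, g ∈ P ∨ g⁻¹ ∈ P ∨ g = 1) ∧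
  (∀ g ∈ P, g⁻¹ ∉ P) ∧
  (1 : G) ∉ P

/-- The automorphism of `ℚ²` given by the matrix `[[1,2],[1,1]]`:
`A(a,b) = (a + 2b, a + b)`. -/
def Amat : (ℚ × ℚ) ≃+ (ℚ × ℚ) where
  toFun x := (x.1 + 2 * x.2, x.1 + x.2)
  invFun x := (-x.1 + 2 * x.2, x.1 - x.2)
  left_inv x := by obtain ⟨a, b⟩ := x; simp; constructor <;> ring
  right_inv x := by obtain ⟨a, b⟩ := x; simp; constructor <;> ring
  map_add' x y := by simp [Prod.add_def]; constructor <;> ring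

/-- The action of `ℤ` on `ℚ²` in which the generator `1 ∈ ℤ` acts by `A`. -/
def Aaction : Multiplicative ℤ →* MulAut (Multiplicative (ℚ × ℚ)) :=
  zpowersHom (MulAut (Multiplicative (ℚ × ℚ))) (AddEquiv.toMultiplicative Amat)

/-- The group `K = ℚ² ⋊ ℤ`, where the generator of `ℤ` acts by `A`. -/
abbrev Kgroup := SemidirectProduct (Multiplicative (ℚ × ℚ)) (Multiplicative ℤ) Aaction

/-- The eigenvalue `1 + √2` of `A`. -/
noncomputable abbrev lam : ℝ := 1 + Real.sqrt 2

lemma lam_pos : 0 < lam := by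
  have := Real.sqrt_nonneg 2; unfold lam; linarith

/-- The eigen-functional `(a, b) ↦ a + √2 b` of `A` for the eigenvalue `1 + √2`. -/
noncomputable def Ffun (v : ℚ × ℚ) : ℝ := (v.1 : ℝ) + Real.sqrt 2 * (v.2 : ℝ)

lemma F_add (v w : ℚ × ℚ) : Ffun (v + w) = Ffun v + Ffun w := by
  simp [Ffun, Prod.fst_add, Prod.snd_add]; ring

lemma F_neg (v : ℚ × ℚ) : Ffun (-v) = - Ffun v := by
  simp [Ffun]; ring

lemma F_zero : Ffun 0 = 0 := by simp [Ffun]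

lemma F_eq_zero {v : ℚ × ℚ} (h : Ffun v = 0) : v = 0 := by
  obtain ⟨a, b⟩ := v
  simp only [Ffun] at h
  by_cases hb : b = 0
  · subst hb; simp at h ⊢; exact_mod_cast h
  · exfalso
    apply irrational_sqrt_two
    refine ⟨-a / b, ?_⟩
    push_cast
    field_simp
    have : Real.sqrt 2 * b = -a := by linarith
    linarith

lemma F_Amat (v : ℚ × ℚ) : Ffun (Amat v) = lam * Ffun v := by
  obtain ⟨a, b⟩ := v
  simp only [Ffun, Amat, AddEquiv.coe_mk, Equiv.coe_fn_mk, lam]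
  have h2 : Real.sqrt 2 * Real.sqrt 2 = 2 := Real.mul_self_sqrt (by norm_num)
  push_cast
  linear_combination (-(b : ℝ)) * h2

lemma F_Amat_symm (v : ℚ × ℚ) : Ffun (Amat.symm v) = lam⁻¹ * Ffun v := by
  have := F_Amat (Amat.symm v)
  rw [AddEquiv.apply_symm_apply] at this
  field_simp
  linarith [this]

lemma F_pow (n : ℤ) (v : ℚ × ℚ) :
    Ffun (Multiplicative.toAdd
      (((AddEquiv.toMultiplicative Amat : MulAut (Multiplicative (ℚ × ℚ))) ^ n)
        (Multiplicative.ofAdd v))) = lam ^ n * Ffun v := by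
  induction n using Int.induction_on generalizing v with
  | zero => simp
  | succ n ih =>
    rw [zpow_add_one, MulAut.mul_apply]
    have : (AddEquiv.toMultiplicative Amat) (Multiplicative.ofAdd v)
        = Multiplicative.ofAdd (Amat v) := rfl
    rw [this, ih (Amat v), F_Amat, zpow_add_one₀ (ne_of_gt lam_pos)]
    ring
  | pred n ih =>
    rw [zpow_sub_one, MulAut.mul_apply]
    have : ((AddEquiv.toMultiplicative Amat : MulAut (Multiplicative (ℚ × ℚ)))⁻¹)
        (Multiplicative.ofAdd v) = Multiplicative.ofAdd (Amat.symm v) := rfl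
    rw [this, ih (Amat.symm v), F_Amat_symm, zpow_sub_one₀ (ne_of_gt lam_pos)]
    ring

/-- The value of the eigen-functional on the `ℚ²`-part of an element of `K`. -/
noncomputable def FK (k : Kgroup) : ℝ := Ffun (Multiplicative.toAdd k.left)

/-- The `ℤ`-part of an element of `K`. -/
def nK (k : Kgroup) : ℤ := Multiplicative.toAdd k.right

lemma F_act (g : Multiplicative ℤ) (x : Multiplicative (ℚ × ℚ)) :
    Ffun (Multiplicative.toAdd (Aaction g x))
      = lam ^ (Multiplicative.toAdd g) * Ffun (Multiplicative.toAdd x) := by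
  have h : Aaction g = (AddEquiv.toMultiplicative Amat : MulAut (Multiplicative (ℚ × ℚ)))
      ^ (Multiplicative.toAdd g) := by
    exact zpowersHom_apply (MulAut (Multiplicative (ℚ × ℚ))) (AddEquiv.toMultiplicative Amat) g
  rw [h]
  have hx : x = Multiplicative.ofAdd (Multiplicative.toAdd x) := rfl
  rw [hx]
  exact F_pow _ _

lemma nK_mul (a b : Kgroup) : nK (a * b) = nK a + nK b := rfl

lemma nK_inv (a : Kgroup) : nK a⁻¹ = - nK a := rfl

lemma nK_one : nK (1 : Kgroup) = 0 := rfl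

lemma FK_mul (a b : Kgroup) : FK (a * b) = FK a + lam ^ (nK a) * FK b := by
  unfold FK
  rw [SemidirectProduct.mul_left, toAdd_mul, F_add, F_act]
  rfl

lemma FK_inv (a : Kgroup) : FK a⁻¹ = - (lam ^ (-(nK a)) * FK a) := by
  unfold FK
  rw [SemidirectProduct.inv_left, F_act]
  have h : Multiplicative.toAdd (a.left)⁻¹ = -(Multiplicative.toAdd a.left) := rfl
  rw [h, F_neg]
  have h2 : Multiplicative.toAdd (a.right)⁻¹ = -(nK a) := rfl
  rw [h2]
  ring

lemma FK_one : FK (1 : Kgroup) = 0 := by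
  unfold FK; rw [SemidirectProduct.one_left]; exact F_zero

lemma eq_one_of (k : Kgroup) (hn : nK k = 0) (hF : FK k = 0) : k = 1 := by
  have hl : k.left = 1 := by
    have := F_eq_zero hF
    have : Multiplicative.toAdd k.left = 0 := this
    exact this
  have hr : k.right = 1 := by
    have : Multiplicative.toAdd k.right = 0 := hn
    exact this
  ext1
  · rw [hl, SemidirectProduct.one_left]
  · rw [hr, SemidirectProduct.one_right]

/-- `K = ℚ² ⋊_A ℤ` is bi-orderable. -/
theorem Kgroup_biOrderable :
    ∃ P : Set Kgroup, IsPositiveCone P ∧ ∀ k : Kgroup, ∀ x ∈ P, k * x * k⁻¹ ∈ P := by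
  refine ⟨{k | 0 < nK k ∨ (nK k = 0 ∧ 0 < FK k)}, ⟨?_, ?_, ?_, ?_⟩, ?_⟩
  · -- closed under multiplication
    rintro a (ha | ⟨ha, ha'⟩) b (hb | ⟨hb, hb'⟩) <;>
      simp only [Set.mem_setOf_eq, nK_mul, FK_mul]
    · left; omega
    · left; omega
    · left; omega
    · right
      refine ⟨by omega, ?_⟩
      rw [ha, zpow_zero]
      linarith
  · -- trichotomy
    intro g
    rcases lt_trichotomy 0 (nK g) with h | h | h
    · exact Or.inl (Or.inl h)
    · rcases lt_trichotomy 0 (FK g) with h' | h' | h'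
      · exact Or.inl (Or.inr ⟨h.symm, h'⟩)
      · exact Or.inr (Or.inr (eq_one_of g h.symm h'.symm))
      · refine Or.inr (Or.inl (Or.inr ⟨by rw [nK_inv]; omega, ?_⟩))
        rw [FK_inv, ← h, neg_zero, zpow_zero, one_mul]
        linarith
    · refine Or.inr (Or.inl (Or.inl ?_))
      rw [nK_inv]; omega
  · -- asymmetry
    rintro g (hg | ⟨hg, hg'⟩) (h | ⟨h, h'⟩)
    · rw [nK_inv] at h; omega
    · rw [nK_inv] at h; omega
    · rw [nK_inv] at h; omega
    · rw [FK_inv, hg, neg_zero, zpow_zero, one_mul] at h'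
      linarith
  · -- 1 ∉ P
    rintro (h | ⟨h, h'⟩)
    · rw [nK_one] at h; omega
    · rw [FK_one] at h'; linarith
  · -- conjugation invariance
    rintro k x (hx | ⟨hx, hx'⟩)
    · left
      simp only [nK_mul, nK_inv]; omega
    · right
      constructor
      · simp only [nK_mul, nK_inv]; omega
      · rw [FK_mul, FK_mul, FK_inv, nK_mul, hx, add_zero]
        have h1 : lam ^ (nK k) * (lam ^ (-(nK k)) * FK k)
            = FK k := by
          rw [← mul_assoc, ← zpow_add₀ (ne_of_gt lam_pos)]
          simp
        have h2 : 0 < lam ^ (nK k) := zpow_pos lam_pos _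
        nlinarith [h1, h2, mul_pos h2 hx']
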